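/- Let r ≥ 1, d ≥ 1 and ℓ ≥ 2 be integers and α ≥ 0, β ≥ 0 real numbers. Let s̃_1, …, s̃_r be nonnegative reals with Σ_{i=1}^{r} s̃_i ≤ d·α, and let p_1, …, p_r be reals with 0 ≤ p_i ≤ β for every i. Then Σ_{i=1}^{r} ((d−1)·s̃_i + d·p_i)^ℓ ≤ (r−1)·(d·β)^ℓ + ((d−1)·d·α + d·β)^ℓ. -/

import Mathlib

lemma sum_pow_le_aux {n : ℕ} (a : Fin n → ℝ) (ha : ∀ i, 0 ≤ a i) (k : ℕ) :
    ∑ i, a i ^ (k + 1) ≤ (∑ i, a i) ^ (k + 1) := by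
  have hS : ∀ i, a i ≤ ∑ j, a j := fun i =>
    Finset.single_le_sum (fun j _ => ha j) (Finset.mem_univ i)
  have hS0 : 0 ≤ ∑ j, a j := Finset.sum_nonneg fun j _ => ha j
  calc ∑ i, a i ^ (k + 1) ≤ ∑ i, a i * (∑ j, a j) ^ k := by
        apply Finset.sum_le_sum
        intro i _
        rw [pow_succ']
        exact mul_le_mul_of_nonneg_left (pow_le_pow_left₀ (ha i) (hS i) k) (ha i)
    _ = (∑ i, a i) ^ (k + 1) := by rw [← Finset.sum_mul, pow_succ']

lemma key_bound (n : ℕ) (ℓ : ℕ) (a : Fin n → ℝ) (ha : ∀ i, 0 ≤ a i)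
    (A c : ℝ) (hc : 0 ≤ c) (hA : ∑ i, a i ≤ A) :
    ∑ i, (a i + c) ^ ℓ ≤ ((n : ℝ) - 1) * c ^ ℓ + (A + c) ^ ℓ := by
  have hA0 : 0 ≤ A := le_trans (Finset.sum_nonneg fun i _ => ha i) hA
  have expand : ∀ x : ℝ, (x + c) ^ ℓ =
      ∑ k ∈ Finset.range (ℓ + 1), x ^ k * c ^ (ℓ - k) * (ℓ.choose k : ℝ) := by
    intro x; rw [add_pow]
  calc ∑ i, (a i + c) ^ ℓ
      = ∑ k ∈ Finset.range (ℓ + 1), (∑ i, a i ^ k) * c ^ (ℓ - k) * (ℓ.choose k : ℝ) := by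
        simp only [expand]
        rw [Finset.sum_comm]
        simp [Finset.sum_mul]
    _ = (n : ℝ) * c ^ ℓ + ∑ k ∈ Finset.range ℓ,
          (∑ i, a i ^ (k + 1)) * c ^ (ℓ - (k + 1)) * (ℓ.choose (k + 1) : ℝ) := by
        rw [Finset.sum_range_succ']
        simp [add_comm]
    _ ≤ (n : ℝ) * c ^ ℓ + ∑ k ∈ Finset.range ℓ,
          A ^ (k + 1) * c ^ (ℓ - (k + 1)) * (ℓ.choose (k + 1) : ℝ) := by
        apply add_le_add_right
        apply Finset.sum_le_sum
        intro k _
        have h1 : (∑ i, a i ^ (k + 1)) ≤ A ^ (k + 1) :=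
          le_trans (sum_pow_le_aux a ha k)
            (pow_le_pow_left₀ (Finset.sum_nonneg fun i _ => ha i) hA _)
        have h2 : (0:ℝ) ≤ c ^ (ℓ - (k + 1)) * (ℓ.choose (k + 1) : ℝ) := by positivity
        calc (∑ i, a i ^ (k + 1)) * c ^ (ℓ - (k + 1)) * (ℓ.choose (k + 1) : ℝ)
            = (∑ i, a i ^ (k + 1)) * (c ^ (ℓ - (k + 1)) * (ℓ.choose (k + 1) : ℝ)) := by ring
          _ ≤ A ^ (k + 1) * (c ^ (ℓ - (k + 1)) * (ℓ.choose (k + 1) : ℝ)) :=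
              mul_le_mul_of_nonneg_right h1 h2
          _ = A ^ (k + 1) * c ^ (ℓ - (k + 1)) * (ℓ.choose (k + 1) : ℝ) := by ring
    _ = ((n : ℝ) - 1) * c ^ ℓ + (A + c) ^ ℓ := by
        rw [expand A, Finset.sum_range_succ']
        simp
        ring

theorem power_sum_bound (r d ℓ : ℕ) (hr : 1 ≤ r) (hd : 1 ≤ d) (hℓ : 2 ≤ ℓ)
    (α β : ℝ) (hα : 0 ≤ α) (hβ : 0 ≤ β)
    (s p : Fin r → ℝ) (hs : ∀ i, 0 ≤ s i) (hssum : ∑ i, s i ≤ (d : ℝ) * α)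
    (hp : ∀ i, 0 ≤ p i ∧ p i ≤ β) :
    ∑ i, (((d : ℝ) - 1) * s i + (d : ℝ) * p i) ^ ℓ
      ≤ ((r : ℝ) - 1) * ((d : ℝ) * β) ^ ℓ
        + (((d : ℝ) - 1) * (d : ℝ) * α + (d : ℝ) * β) ^ ℓ := by
  have hd1 : (0 : ℝ) ≤ (d : ℝ) - 1 := by
    have : (1 : ℝ) ≤ d := by exact_mod_cast hd
    linarith
  have hd0 : (0 : ℝ) ≤ d := by positivity
  have ha : ∀ i, 0 ≤ ((d : ℝ) - 1) * s i := fun i => mul_nonneg hd1 (hs i)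
  calc ∑ i, (((d : ℝ) - 1) * s i + (d : ℝ) * p i) ^ ℓ
      ≤ ∑ i, (((d : ℝ) - 1) * s i + (d : ℝ) * β) ^ ℓ := by
        apply Finset.sum_le_sum
        intro i _
        apply pow_le_pow_left₀
        · exact add_nonneg (ha i) (mul_nonneg hd0 (hp i).1)
        · exact add_le_add_right (mul_le_mul_of_nonneg_left (hp i).2 hd0) _
    _ ≤ ((r : ℝ) - 1) * ((d : ℝ) * β) ^ ℓ
        + (((d : ℝ) - 1) * (d : ℝ) * α + (d : ℝ) * β) ^ ℓ := by
        apply key_bound r ℓ _ ha _ _ (by positivity)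
        rw [← Finset.mul_sum, mul_assoc]
        exact mul_le_mul_of_nonneg_left hssum hd1
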